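/- Let A be a ring and e ∈ A an idempotent such that eA is a two-sided ideal of A (equivalently, (1−e)Ae = 0). Then the following are equivalent: (1) for every right A-module M, the submodule M·(eA) is a direct summand of M; (2) eA(1−e) is hereditary Σ-injective as a right module over the corner ring (1−e)A(1−e). -/

import Mathlib

open MulOpposite

section Corner

variable (A : Type) [Ring A]

/-- The corner ring `fAf = {x : A | f·x·f = x}` attached to an idempotent `f` of `A`;
it is a ring with identity `f`. -/
def CornerRing (f : A) (_hf : f * f = f) : Type := {x : A // f * x * f = x}

variable {A}

lemma absorb_left {f x : A} (hf : f * f = f) (h : f * x * f = x) : f * x = x := by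
  conv_lhs => rw [← h]
  rw [← mul_assoc, ← mul_assoc, hf, h]

lemma absorb_right {f x : A} (hf : f * f = f) (h : f * x * f = x) : x * f = x := by
  conv_lhs => rw [← h]
  rw [mul_assoc, mul_assoc, hf, ← mul_assoc, h]

namespace CornerRing

variable {f : A} {hf : f * f = f}

instance : Add (CornerRing A f hf) := ⟨fun x y => ⟨x.1 + y.1, by rw [mul_add, add_mul, x.2, y.2]⟩⟩
instance : Zero (CornerRing A f hf) := ⟨⟨0, by rw [mul_zero, zero_mul]⟩⟩
instance : Neg (CornerRing A f hf) := ⟨fun x => ⟨-x.1, by rw [mul_neg, neg_mul, x.2]⟩⟩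
instance : Mul (CornerRing A f hf) :=
  ⟨fun x y => ⟨x.1 * y.1, by rw [← mul_assoc, absorb_left hf x.2, mul_assoc,
    absorb_right hf y.2]⟩⟩
instance : One (CornerRing A f hf) := ⟨⟨f, by rw [hf, hf]⟩⟩

instance instRing : Ring (CornerRing A f hf) where
  nsmul := nsmulRec
  zsmul := zsmulRec
  add_assoc x y z := Subtype.ext (add_assoc x.1 y.1 z.1)
  zero_add x := Subtype.ext (zero_add x.1)
  add_zero x := Subtype.ext (add_zero x.1)
  add_comm x y := Subtype.ext (add_comm x.1 y.1)
  neg_add_cancel x := Subtype.ext (neg_add_cancel x.1)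
  mul_assoc x y z := Subtype.ext (mul_assoc x.1 y.1 z.1)
  one_mul x := Subtype.ext (absorb_left hf x.2)
  mul_one x := Subtype.ext (absorb_right hf x.2)
  left_distrib x y z := Subtype.ext (mul_add x.1 y.1 z.1)
  right_distrib x y z := Subtype.ext (add_mul x.1 y.1 z.1)
  zero_mul x := Subtype.ext (zero_mul x.1)
  mul_zero x := Subtype.ext (mul_zero x.1)

end CornerRing

lemma one_sub_idem {e : A} (he : e * e = e) : (1 - e) * (1 - e) = 1 - e := by
  have h : (1 - e) * (1 - e) = 1 - e - e + e * e := by noncomm_ring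
  rw [h, he]; abel

variable (A)

/-- `eA(1-e) = {x : A | e·x·(1-e) = x}`, which is a right module over the corner ring
`(1-e)A(1-e)`. -/
def Trap (e : A) (_he : e * e = e) : Type := {x : A // e * x * (1 - e) = x}

variable {A}

namespace Trap

variable {e : A} {he : e * e = e}

lemma trap_left {x : A} (h : e * x * (1 - e) = x) (he : e * e = e) : e * x = x := by
  conv_lhs => rw [← h]
  rw [← mul_assoc, ← mul_assoc, he, h]

lemma trap_right {x : A} (h : e * x * (1 - e) = x) (he : e * e = e) : x * (1 - e) = x := by
  conv_lhs => rw [← h]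
  rw [mul_assoc, mul_assoc, one_sub_idem he, ← mul_assoc, h]

instance : Add (Trap A e he) := ⟨fun x y => ⟨x.1 + y.1, by rw [mul_add, add_mul, x.2, y.2]⟩⟩
instance : Zero (Trap A e he) := ⟨⟨0, by rw [mul_zero, zero_mul]⟩⟩
instance : Neg (Trap A e he) := ⟨fun x => ⟨-x.1, by rw [mul_neg, neg_mul, x.2]⟩⟩

instance instAddCommGroup : AddCommGroup (Trap A e he) where
  nsmul := nsmulRec
  zsmul := zsmulRec
  add_assoc x y z := Subtype.ext (add_assoc x.1 y.1 z.1)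
  zero_add x := Subtype.ext (zero_add x.1)
  add_zero x := Subtype.ext (add_zero x.1)
  add_comm x y := Subtype.ext (add_comm x.1 y.1)
  neg_add_cancel x := Subtype.ext (neg_add_cancel x.1)

instance instSMul : SMul (CornerRing A (1 - e) (one_sub_idem he))ᵐᵒᵖ (Trap A e he) :=
  ⟨fun c x => ⟨x.1 * c.unop.1, by
    rw [← mul_assoc, trap_left x.2 he, mul_assoc, absorb_right (one_sub_idem he) c.unop.2]⟩⟩

instance instMulAction :
    MulAction (CornerRing A (1 - e) (one_sub_idem he))ᵐᵒᵖ (Trap A e he) where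
  one_smul x := Subtype.ext (trap_right x.2 he)
  mul_smul c d x := Subtype.ext (mul_assoc x.1 d.unop.1 c.unop.1).symm

instance instDistribMulAction :
    DistribMulAction (CornerRing A (1 - e) (one_sub_idem he))ᵐᵒᵖ (Trap A e he) where
  smul_zero c := Subtype.ext (zero_mul c.unop.1)
  smul_add c x y := Subtype.ext (add_mul x.1 y.1 c.unop.1)

instance instModule :
    Module (CornerRing A (1 - e) (one_sub_idem he))ᵐᵒᵖ (Trap A e he) where
  add_smul c d x := Subtype.ext (mul_add x.1 c.unop.1 d.unop.1)
  zero_smul x := Subtype.ext (mul_zero x.1)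

end Trap

end Corner

/-- A submodule is a direct summand if it has a complement. -/
def IsDirectSummand {R M : Type} [Ring R] [AddCommGroup M] [Module R M]
    (N : Submodule R M) : Prop :=
  ∃ N' : Submodule R M, N ⊓ N' = ⊥ ∧ N ⊔ N' = ⊤

-- generic injectivity helpers
section Helpers
variable {R : Type} [Ring R]

theorem injOfEquiv {M N : Type} [AddCommGroup M] [AddCommGroup N] [Module R M] [Module R N]
    (eq : M ≃ₗ[R] N) (h : Module.Injective R M) : Module.Injective R N := by
  constructor
  intro X Y _ _ _ _ f hf g
  obtain ⟨h', hh⟩ := h.out f hf (eq.symm.toLinearMap.comp g)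
  exact ⟨eq.toLinearMap.comp h', fun x => by simp [hh x]⟩

theorem injOfRetract {M E : Type} [AddCommGroup M] [AddCommGroup E] [Module R M] [Module R E]
    (i : M →ₗ[R] E) (r : E →ₗ[R] M) (hri : ∀ x, r (i x) = x)
    (hE : Module.Injective R E) : Module.Injective R M := by
  constructor
  intro X Y _ _ _ _ f hf g
  obtain ⟨h', hh⟩ := hE.out f hf (i.comp g)
  exact ⟨r.comp h', fun x => by simp [hh x, hri]⟩

/-- An injective submodule is a direct summand (IsCompl form). -/
theorem injSubmoduleCompl {P : Type} [AddCommGroup P] [Module R P] (N : Submodule R P)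
    (hN : Module.Injective R N) : ∃ K : Submodule R P, IsCompl N K := by
  obtain ⟨r, hr⟩ := hN.out N.subtype (Submodule.injective_subtype N) LinearMap.id
  refine ⟨LinearMap.ker r, ?_, ?_⟩
  · rw [Submodule.disjoint_def]
    intro x hxN hxK
    have := hr ⟨x, hxN⟩
    simp only [Submodule.coe_subtype, LinearMap.id_coe, id_eq] at this
    rw [LinearMap.mem_ker.mp hxK] at this
    simpa using congrArg (N.subtype) this.symm
  · rw [codisjoint_iff, eq_top_iff]
    intro p _
    have h1 : p - N.subtype (r p) ∈ LinearMap.ker r := by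
      rw [LinearMap.mem_ker, map_sub]
      have := hr (r p)
      simp only [LinearMap.id_coe, id_eq] at this
      rw [this, sub_self]
    have : p = N.subtype (r p) + (p - N.subtype (r p)) := by abel
    rw [this]
    exact Submodule.add_mem_sup (Submodule.coe_mem (r p)) h1

/-- Every module embeds in an injective module. -/
theorem exists_inj_ext (Q : Type) [AddCommGroup Q] [Module R Q] :
    ∃ (E : Type) (_ : AddCommGroup E) (_ : Module R E),
      Module.Injective R E ∧ ∃ j : Q →ₗ[R] E, Function.Injective j := by
  have : CategoryTheory.EnoughInjectives (ModuleCat.{0} R) := inferInstance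
  let Qc : ModuleCat.{0} R := ModuleCat.of R Q
  let E := CategoryTheory.Injective.under Qc
  refine ⟨E, inferInstance, inferInstance, ?_, ?_⟩
  · exact Module.injective_module_of_injective_object R E
      (inj := show CategoryTheory.Injective (ModuleCat.of R E) from
        CategoryTheory.Injective.injective_under Qc)
  · exact ⟨(CategoryTheory.Injective.ι Qc).hom,
      (ModuleCat.mono_iff_injective (CategoryTheory.Injective.ι Qc)).mp inferInstance⟩
end Helpers
section RingFacts
variable {A : Type} [Ring A] {e : A} (he : e * e = e) (htwo : ∀ a : A, (1 - e) * a * e = 0)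

lemma sandwich {f : A} (hf : f * f = f) (x : A) : f * (f * x * f) * f = f * x * f := by
  rw [← mul_assoc, ← mul_assoc, hf, mul_assoc (f*x) f f, hf]

/-- The ring hom `Aᵐᵒᵖ → ((1-e)A(1-e))ᵐᵒᵖ`, `a ↦ (1-e)a(1-e)`. -/
def cornerHom : Aᵐᵒᵖ →+* (CornerRing A (1 - e) (one_sub_idem he))ᵐᵒᵖ where
  toFun a := op ⟨(1 - e) * a.unop * (1 - e), sandwich (one_sub_idem he) a.unop⟩
  map_one' := by
    apply congrArg op; apply Subtype.ext
    show (1 - e) * (1:A) * (1 - e) = 1 - e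
    rw [mul_one, one_sub_idem he]
  map_mul' x y := by
    apply congrArg op; apply Subtype.ext
    show (1 - e) * (y.unop * x.unop) * (1 - e)
      = ((1 - e) * y.unop * (1 - e)) * ((1 - e) * x.unop * (1 - e))
    have h1 : (1 - e) * y.unop * (1 - e) * (1 - e) = (1 - e) * y.unop * (1 - e) := by
      rw [mul_assoc ((1-e) * y.unop) (1-e) (1-e), one_sub_idem he]
    have h2 : (1 - e) * y.unop * (1 - e) = (1 - e) * y.unop - (1 - e) * y.unop * e := by
      rw [mul_sub, mul_one]
    have h3 : (1 - e) * y.unop * (1 - e) = (1 - e) * y.unop := by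
      rw [h2, htwo y.unop, sub_zero]
    calc (1 - e) * (y.unop * x.unop) * (1 - e)
        = ((1 - e) * y.unop) * (x.unop * (1 - e)) := by noncomm_ring
      _ = ((1 - e) * y.unop * (1 - e)) * (x.unop * (1 - e)) := by rw [h3]
      _ = ((1 - e) * y.unop * (1 - e)) * ((1 - e) * x.unop * (1 - e)) := by
          conv_rhs => rw [show ((1 - e) * y.unop * (1 - e)) * ((1 - e) * x.unop * (1 - e))
            = ((1 - e) * y.unop * (1 - e) * (1 - e)) * (x.unop * (1 - e)) by noncomm_ring]
          rw [h1]
  map_zero' := by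
    apply congrArg op; apply Subtype.ext
    show (1 - e) * (0:A) * (1 - e) = 0
    rw [mul_zero, zero_mul]
  map_add' x y := by
    apply congrArg op; apply Subtype.ext
    show (1 - e) * (x.unop + y.unop) * (1 - e)
      = (1 - e) * x.unop * (1 - e) + (1 - e) * y.unop * (1 - e)
    rw [mul_add, add_mul]

lemma cornerHom_corner (c : (CornerRing A (1 - e) (one_sub_idem he))ᵐᵒᵖ) :
    cornerHom he htwo (op c.unop.1) = c := by
  apply unop_injective
  apply Subtype.ext
  exact c.unop.2

lemma cornerHom_e_mul (a : A) : cornerHom he htwo (op (e * a)) = 0 := by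
  apply congrArg op; apply Subtype.ext
  show (1 - e) * (e * a) * (1 - e) = 0
  have : (1 - e) * e = 0 := by rw [sub_mul, one_mul, he, sub_self]
  rw [← mul_assoc, this, zero_mul, zero_mul]

lemma one_sub_mul_eq (htwo : ∀ a : A, (1 - e) * a * e = 0) (a : A) : (1 - e) * a * (1 - e) = (1 - e) * a := by
  rw [mul_sub, mul_one, htwo, sub_zero]

end RingFacts

section RingFacts2
variable {A : Type} [Ring A]
lemma sandwich2 {f g : A} (hf : f * f = f) (hg : g * g = g) (x : A) :
    f * (f * x * g) * g = f * x * g := by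
  rw [← mul_assoc, ← mul_assoc, hf, mul_assoc (f*x) g g, hg]
end RingFacts2
section Dir21
variable {A : Type} [Ring A] (e : A) [hfe : Fact (e * e = e)]
  [hftwo : Fact (∀ a : A, (1 - e) * a * e = 0)]
variable (M : Type) [AddCommGroup M] [Module Aᵐᵒᵖ M]

local notation "RC" => (CornerRing A (1 - e) (one_sub_idem hfe.out))ᵐᵒᵖ
local notation "TT" => Trap A e hfe.out

lemma opSmulSmul (x y : A) (m : M) : op x • op y • m = op (y * x) • m := by
  rw [smul_smul, ← op_mul]

/-- `M(1-e)` as an `Aᵐᵒᵖ`-submodule of `M`. -/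
def M1sub : Submodule Aᵐᵒᵖ M where
  carrier := {m | op (1 - e) • m = m}
  add_mem' := by
    intro a b ha hb
    simp only [Set.mem_setOf_eq] at *
    rw [smul_add, ha, hb]
  zero_mem' := smul_zero _
  smul_mem' := by
    intro a m hm
    simp only [Set.mem_setOf_eq] at *
    have h1 : a • m = op ((1 - e) * unop a) • m := by
      conv_lhs => rw [← op_unop a, ← hm]
      rw [opSmulSmul]
    have h2 : op (1 - e) • op ((1 - e) * unop a) • m = op ((1 - e) * unop a * (1 - e)) • m := by
      rw [opSmulSmul]
    rw [h1, h2, one_sub_mul_eq hftwo.out]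

omit hfe in
lemma mem_M1sub {m : M} : m ∈ M1sub e M ↔ op (1 - e) • m = m := Iff.rfl

instance m1SMul : SMul RC ↥(M1sub e M) :=
  ⟨fun c m => ⟨op c.unop.1 • m.1, by
    have h2 : op (1 - e) • op c.unop.1 • m.1 = op (c.unop.1 * (1 - e)) • m.1 := by
      rw [opSmulSmul]
    rw [mem_M1sub, h2, absorb_right (one_sub_idem hfe.out) c.unop.2]⟩⟩

lemma m1SMul_val (c : RC) (m : ↥(M1sub e M)) :
    (c • m).1 = op c.unop.1 • m.1 := rfl

instance m1Module : Module RC ↥(M1sub e M) where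
  one_smul m := Subtype.ext (by rw [m1SMul_val]; exact m.2)
  mul_smul c d m := Subtype.ext (by
    rw [m1SMul_val, m1SMul_val, m1SMul_val, opSmulSmul]
    rfl)
  smul_zero c := Subtype.ext (by rw [m1SMul_val]; exact smul_zero _)
  smul_add c x y := Subtype.ext (by
    rw [m1SMul_val]
    show op c.unop.1 • (x.1 + y.1) = (c • x).1 + (c • y).1
    rw [smul_add, m1SMul_val, m1SMul_val])
  add_smul c d m := Subtype.ext (by
    rw [m1SMul_val]
    show op (c.unop.1 + d.unop.1) • m.1 = (c • m).1 + (d • m).1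
    rw [op_add, add_smul, m1SMul_val, m1SMul_val])
  zero_smul m := Subtype.ext (by
    rw [m1SMul_val]
    show op (0 : A) • m.1 = (0 : M)
    rw [op_zero, zero_smul])

/-- The `R`-linear map `T → M(1-e)`, `t ↦ m·t`. -/
def tau (m : M) : TT →ₗ[RC] ↥(M1sub e M) where
  toFun t := ⟨op t.1 • m, by
    rw [mem_M1sub, opSmulSmul, Trap.trap_right t.2 hfe.out]⟩
  map_add' t s := Subtype.ext (by
    show op ((t.1 : A) + s.1) • m = _
    rw [op_add, add_smul]; rfl)
  map_smul' c t := Subtype.ext (by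
    show op ((t.1 : A) * c.unop.1) • m = (c • (⟨op t.1 • m, _⟩ : ↥(M1sub e M))).1
    rw [m1SMul_val, opSmulSmul])

/-- `ψ : (M →₀ T) → M(1-e)` sending `single m t` to `m·t`; its range is `M·T`. -/
noncomputable def psi : (M →₀ TT) →ₗ[RC] ↥(M1sub e M) :=
  Finsupp.lsum ℕ (tau e M)

lemma psi_single (m : M) (t : TT) :
    psi e M (Finsupp.single m t) = tau e M m t := by
  simp [psi]

end Dir21
section Dir21b
variable {A : Type} [Ring A] (e : A) [hfe : Fact (e * e = e)]
  [hftwo : Fact (∀ a : A, (1 - e) * a * e = 0)]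
variable (M : Type) [AddCommGroup M] [Module Aᵐᵒᵖ M]

local notation "RC" => (CornerRing A (1 - e) (one_sub_idem hfe.out))ᵐᵒᵖ
local notation "TT" => Trap A e hfe.out

lemma one_sub_mem_M1sub (x : M) : op (1 - e) • x ∈ M1sub e M := by
  rw [mem_M1sub, opSmulSmul, one_sub_idem hfe.out]

theorem dir21main
    (hyp : ∀ (ι : Type) (N : Submodule RC (ι →₀ TT)), Module.Injective RC ((ι →₀ TT) ⧸ N)) :
    IsDirectSummand (Submodule.span Aᵐᵒᵖ {x : M | ∃ (m : M) (a : A), x = op (e * a) • m}) := by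
  have he := hfe.out
  have htwo := hftwo.out
  set S := Submodule.span Aᵐᵒᵖ {x : M | ∃ (m : M) (a : A), x = op (e * a) • m} with hS
  -- the submodule M·T of M(1-e)
  set NT := LinearMap.range (psi e M) with hNT
  have hNTinj : Module.Injective RC ↥NT :=
    injOfEquiv (LinearMap.quotKerEquivRange (psi e M)) (hyp M (LinearMap.ker (psi e M)))
  obtain ⟨K', hK'⟩ := injSubmoduleCompl NT hNTinj
  -- the complement as an `Aᵐᵒᵖ`-submodule of `M`
  refine ⟨{ carrier := {m | ∃ h : m ∈ M1sub e M, (⟨m, h⟩ : ↥(M1sub e M)) ∈ K'}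
            add_mem' := ?_
            zero_mem' := ?_
            smul_mem' := ?_ }, ?_, ?_⟩
  · rintro a b ⟨ha, hak⟩ ⟨hb, hbk⟩
    exact ⟨(M1sub e M).add_mem ha hb, K'.add_mem hak hbk⟩
  · exact ⟨(M1sub e M).zero_mem, K'.zero_mem⟩
  · rintro a m ⟨hm, hk⟩
    have hm' : op (1 - e) • m = m := hm
    have key : a • m = (cornerHom he htwo a • (⟨m, hm⟩ : ↥(M1sub e M))).1 := by
      rw [m1SMul_val]
      show a • m = op ((1 - e) * unop a * (1 - e)) • m
      rw [one_sub_mul_eq htwo]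
      conv_lhs => rw [← op_unop a, ← hm']
      rw [opSmulSmul]
    refine ⟨(M1sub e M).smul_mem a hm, ?_⟩
    have : (⟨a • m, (M1sub e M).smul_mem a hm⟩ : ↥(M1sub e M))
        = cornerHom he htwo a • ⟨m, hm⟩ := Subtype.ext key
    rw [this]
    exact K'.smul_mem _ hk
  -- facts: values of ψ lie in S
  · have hNTinS : ∀ g : M →₀ TT, ((psi e M) g).1 ∈ S := by
      intro g
      induction g using Finsupp.induction_linear with
      | zero => rw [map_zero]; exact S.zero_mem
      | add f g hf hg =>
        rw [map_add]
        exact S.add_mem hf hg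
      | single m t =>
        rw [psi_single]
        show op (t.1 : A) • m ∈ S
        apply Submodule.subset_span
        exact ⟨m, t.1, by rw [Trap.trap_left t.2 he]⟩
    -- S ⊓ K = ⊥ : first show x ∈ S implies x·(1-e) ∈ NT
    have hS' : ∀ x, x ∈ S → (⟨op (1 - e) • x, one_sub_mem_M1sub e M x⟩ : ↥(M1sub e M)) ∈ NT := by
      intro x hx
      let S' : Submodule Aᵐᵒᵖ M :=
        { carrier := {x | (⟨op (1 - e) • x, one_sub_mem_M1sub e M x⟩ : ↥(M1sub e M)) ∈ NT}
          add_mem' := by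
            intro a b ha hb
            have : (⟨op (1 - e) • (a + b), one_sub_mem_M1sub e M _⟩ : ↥(M1sub e M))
                = ⟨op (1 - e) • a, one_sub_mem_M1sub e M _⟩
                  + ⟨op (1 - e) • b, one_sub_mem_M1sub e M _⟩ := Subtype.ext (smul_add _ _ _)
            show _ ∈ NT
            rw [this]
            exact NT.add_mem ha hb
          zero_mem' := by
            have : (⟨op (1 - e) • (0 : M), one_sub_mem_M1sub e M _⟩ : ↥(M1sub e M)) = 0 :=
              Subtype.ext (smul_zero _)
            show _ ∈ NT
            rw [this]
            exact NT.zero_mem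
          smul_mem' := by
            intro a x hx
            show _ ∈ NT
            have ht : e * (e * unop a * (1 - e)) * (1 - e) = e * unop a * (1 - e) :=
              sandwich2 he (one_sub_idem he) _
            have hsplit : op (1 - e) • (a • x)
                = op ((e * unop a * (1 - e) : A)) • x + op ((1 - e) * unop a * (1 - e)) • x := by
              conv_lhs => rw [← op_unop a]
              rw [opSmulSmul]
              have : unop a * (1 - e) = e * unop a * (1 - e) + (1 - e) * unop a * (1 - e) := by
                noncomm_ring
              rw [this, op_add, add_smul]
            have h1 : op ((e * unop a * (1 - e) : A)) • x
                = ((psi e M) (Finsupp.single x ⟨e * unop a * (1 - e), ht⟩)).1 := by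
              refine Eq.trans ?_ (congrArg Subtype.val (psi_single e M x _)).symm; rfl
            have h2 : op ((1 - e) * unop a * (1 - e)) • x
                = (cornerHom he htwo a
                    • (⟨op (1 - e) • x, one_sub_mem_M1sub e M x⟩ : ↥(M1sub e M))).1 := by
              rw [m1SMul_val]
              show _ = op ((1 - e) * unop a * (1 - e)) • op (1 - e) • x
              rw [opSmulSmul, ← mul_assoc, ← mul_assoc, one_sub_idem he]
            have : (⟨op (1 - e) • (a • x), one_sub_mem_M1sub e M _⟩ : ↥(M1sub e M))
                = (psi e M) (Finsupp.single x ⟨e * unop a * (1 - e), ht⟩)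
                  + cornerHom he htwo a • ⟨op (1 - e) • x, one_sub_mem_M1sub e M x⟩ := by
              apply Subtype.ext
              rw [Submodule.coe_add]
              show op (1 - e) • (a • x) = _
              rw [hsplit, h1, h2]
            rw [this]
            exact NT.add_mem (LinearMap.mem_range_self _ _) (NT.smul_mem _ hx) }
      have hgen : {x : M | ∃ (m : M) (a : A), x = op (e * a) • m} ⊆ S' := by
        rintro x ⟨m, a, rfl⟩
        show _ ∈ NT
        have ht : e * (e * a * (1 - e)) * (1 - e) = e * a * (1 - e) :=
          sandwich2 he (one_sub_idem he) _
        have : (⟨op (1 - e) • (op (e * a) • m), one_sub_mem_M1sub e M _⟩ : ↥(M1sub e M))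
            = (psi e M) (Finsupp.single m ⟨e * a * (1 - e), ht⟩) := by
          refine Eq.trans ?_ (psi_single e M m _).symm
          apply Subtype.ext
          show op (1 - e) • (op (e * a) • m) = op (e * a * (1 - e)) • m
          rw [opSmulSmul]
        rw [this]
        exact LinearMap.mem_range_self _ _
      exact (Submodule.span_le.mpr hgen : S ≤ S') hx
    rw [eq_bot_iff]
    rintro x ⟨hxS, hx1, hxK⟩
    have hx1' : op (1 - e) • x = x := hx1
    have hmem : (⟨x, hx1⟩ : ↥(M1sub e M)) ∈ NT := by
      have := hS' x hxS
      rwa [show (⟨op (1 - e) • x, one_sub_mem_M1sub e M x⟩ : ↥(M1sub e M)) = ⟨x, hx1⟩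
        from Subtype.ext hx1'] at this
    have : (⟨x, hx1⟩ : ↥(M1sub e M)) = 0 :=
      Submodule.disjoint_def.mp hK'.disjoint _ hmem hxK
    simpa using congrArg Subtype.val this
  -- S ⊔ K = ⊤
  · have hNTinS : ∀ g : M →₀ TT, ((psi e M) g).1 ∈ S := by
      intro g
      induction g using Finsupp.induction_linear with
      | zero => rw [map_zero]; exact S.zero_mem
      | add f g hf hg =>
        rw [map_add]
        exact S.add_mem hf hg
      | single m t =>
        rw [psi_single]
        show op (t.1 : A) • m ∈ S
        apply Submodule.subset_span
        exact ⟨m, t.1, by rw [Trap.trap_left t.2 he]⟩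
    rw [eq_top_iff]
    intro m _
    have hdecomp : m = op e • m + op (1 - e) • m := by
      have : (op e + op (1 - e)) • m = m := by
        rw [← op_add, show e + (1 - e) = 1 by abel, op_one, one_smul]
      conv_lhs => rw [← this]
      rw [add_smul]
    have h1 : op e • m ∈ S := Submodule.subset_span ⟨m, 1, by rw [mul_one]⟩
    have h2 : (⟨op (1 - e) • m, one_sub_mem_M1sub e M m⟩ : ↥(M1sub e M)) ∈ NT ⊔ K' := by
      rw [hK'.sup_eq_top]; trivial
    obtain ⟨y, hy, z, hz, hyz⟩ := Submodule.mem_sup.mp h2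
    have hyS : (y.1 : M) ∈ S := by
      obtain ⟨g, hg⟩ := hy
      rw [← hg]; exact hNTinS g
    have hzK : (z.1 : M) ∈ {m | ∃ h : m ∈ M1sub e M, (⟨m, h⟩ : ↥(M1sub e M)) ∈ K'} := by
      exact ⟨z.2, by rwa [Subtype.coe_eta]⟩
    have hsum : op (1 - e) • m = (y.1 : M) + z.1 := by
      have := congrArg Subtype.val hyz
      exact this.symm
    rw [hdecomp, hsum, ← add_assoc]
    apply Submodule.add_mem_sup (S.add_mem h1 hyS) hzK

end Dir21b
section Dir12
variable {A : Type} [Ring A] (e : A) [hfe : Fact (e * e = e)]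
  [hftwo : Fact (∀ a : A, (1 - e) * a * e = 0)]

local notation "RC" => (CornerRing A (1 - e) (one_sub_idem hfe.out))ᵐᵒᵖ
local notation "TT" => Trap A e hfe.out

lemma cornerHom_one_sub :
    cornerHom hfe.out hftwo.out (op (1 - e)) = 1 := by
  apply unop_injective
  apply Subtype.ext
  show (1 - e) * (1 - e) * (1 - e) = 1 - e
  rw [one_sub_idem hfe.out, one_sub_idem hfe.out]

omit hfe in
lemma e_mul_stable (x a : A) (htwo : ∀ a : A, (1 - e) * a * e = 0) (he : e * e = e) :
    e * (x * (e * a)) = x * (e * a) := by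
  have h0 : (1 - e) * (x * (e * a)) = 0 := by
    have h1 : (1 - e) * (x * (e * a)) = ((1 - e) * x * e) * a := by noncomm_ring
    rw [h1, htwo x, zero_mul]
  have h2 : x * (e * a) - e * (x * (e * a)) = (1 - e) * (x * (e * a)) := by noncomm_ring
  rw [h0] at h2
  exact (sub_eq_zero.mp h2).symm

theorem dir12main (ι : Type) (N : Submodule RC (ι →₀ TT))
    (hyp1 : ∀ (M : Type) [AddCommGroup M] [Module Aᵐᵒᵖ M],
      IsDirectSummand (Submodule.span Aᵐᵒᵖ {x : M | ∃ (m : M) (a : A), x = op (e * a) • m})) :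
    Module.Injective RC ((ι →₀ TT) ⧸ N) := by
  have he := hfe.out
  have htwo := hftwo.out
  set F := ((ι : Type) →₀ TT) with hF
  set Q := (F ⧸ N) with hQ
  obtain ⟨E, _, _, hEinj, j, hj⟩ := exists_inj_ext (R := RC) Q
  letI : Module Aᵐᵒᵖ E := Module.compHom E (cornerHom he htwo)
  letI : Module Aᵐᵒᵖ F := Module.compHom F (cornerHom he htwo)
  have smulE : ∀ (a : Aᵐᵒᵖ) (u : E), a • u = (cornerHom he htwo a) • u := fun _ _ => rfl
  have smulF : ∀ (a : Aᵐᵒᵖ) (g : F), a • g = (cornerHom he htwo a) • g := fun _ _ => rfl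
  set FA := ((ι : Type) →₀ A) with hFA
  -- the A-linear inclusion χ : F → FA
  let chiAdd : F →+ FA := Finsupp.mapRange.addMonoidHom
    ⟨⟨fun t : TT => (t.1 : A), rfl⟩, fun _ _ => rfl⟩
  have chi_apply : ∀ (g : F) (i : ι), chiAdd g i = (g i).1 := by
    intro g i
    rfl
  let chi : F →ₗ[Aᵐᵒᵖ] FA :=
    { toFun := chiAdd
      map_add' := chiAdd.map_add
      map_smul' := by
        intro a g
        show chiAdd ((cornerHom he htwo a) • g) = a • chiAdd g
        ext i
        rw [chi_apply]
        rw [Finsupp.smul_apply, Finsupp.smul_apply]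
        show ((g i).1 * ((cornerHom he htwo a).unop.1 : A)) = chiAdd g i * unop a
        rw [chi_apply]
        show (g i).1 * ((1 - e) * unop a * (1 - e)) = (g i).1 * unop a
        rw [one_sub_mul_eq htwo, ← mul_assoc, Trap.trap_right (g i).2 he] }
  have chi_apply' : ∀ (g : F) (i : ι), chi g i = (g i).1 := fun g i => chi_apply g i
  have chi_inj : Function.Injective chi := by
    intro g g' h
    ext i
    have := congrArg (fun y : FA => y i) h
    rw [chi_apply', chi_apply'] at this
    exact Subtype.ext_iff.mpr this
  -- the A-linear map λ0 : F → E
  let lam : F →ₗ[Aᵐᵒᵖ] E :=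
    { toFun := fun g => j (N.mkQ g)
      map_add' := by
        intro g g'
        show j (N.mkQ (g + g')) = j (N.mkQ g) + j (N.mkQ g')
        rw [map_add, map_add]
      map_smul' := by
        intro a g
        show j (N.mkQ ((cornerHom he htwo a) • g)) = a • (j (N.mkQ g))
        rw [map_smul, map_smul, smulE] }
  set w := chi.prod (-lam) with hw
  set W := LinearMap.range w with hW
  set M := ((FA × E) ⧸ W) with hM
  obtain ⟨K, hKinf, hKsup⟩ := hyp1 M
  set S := Submodule.span Aᵐᵒᵖ {x : M | ∃ (m : M) (a : A), x = op (e * a) • m} with hS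
  set eps := W.mkQ.comp (LinearMap.inr Aᵐᵒᵖ FA E) with heps
  have eps_apply : ∀ u : E, eps u = W.mkQ (0, u) := fun _ => rfl
  have eps_inj : Function.Injective eps := by
    have : ∀ u : E, eps u = 0 → u = 0 := by
      intro u hu
      rw [eps_apply] at hu
      obtain ⟨g, hg⟩ := (Submodule.Quotient.mk_eq_zero W).mp hu
      have hg1 : chi g = 0 := congrArg Prod.fst hg
      have : g = 0 := chi_inj (by rw [hg1, map_zero])
      have hg2 : -lam g = u := congrArg Prod.snd hg
      rw [this, map_zero, neg_zero] at hg2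
      exact hg2.symm
    intro u v huv
    have : u - v = 0 := this _ (by rw [map_sub, huv, sub_self])
    exact sub_eq_zero.mp this
  -- mkQ (χ g, 0) = ε (j (qm g)) and lies in S
  have hTeq : ∀ g : F, W.mkQ (chi g, 0) = eps (j (N.mkQ g)) := by
    intro g
    rw [eps_apply]
    apply (Submodule.Quotient.eq W).mpr
    refine ⟨g, ?_⟩
    refine Prod.ext_iff.mpr ⟨?_, ?_⟩
    · show chi g = chi g - 0
      rw [sub_zero]
    · show -lam g = 0 - j (N.mkQ g)
      rw [zero_sub]
      rfl
  have hTinS : ∀ g : F, W.mkQ (chi g, 0) ∈ S := by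
    intro g
    induction g using Finsupp.induction_linear with
    | zero => rw [map_zero]; rw [show ((0 : FA), (0:E)) = 0 from rfl, map_zero]; exact S.zero_mem
    | add f g hf hg =>
      rw [map_add]
      rw [show ((chi f + chi g : FA), (0:E)) = (chi f, 0) + (chi g, 0) by simp]
      rw [map_add]
      exact S.add_mem hf hg
    | single i t =>
      have h1 : chi (Finsupp.single i t) = Finsupp.single i (t.1 : A) := by
        ext i'
        rw [chi_apply']
        rcases eq_or_ne i i' with rfl | hne
        · rw [Finsupp.single_eq_same, Finsupp.single_eq_same]
        · rw [Finsupp.single_eq_of_ne hne.symm, Finsupp.single_eq_of_ne hne.symm]; rfl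
      have h2 : (Finsupp.single i (t.1 : A), (0:E))
          = op (e * t.1) • ((Finsupp.single i (1:A), (0:E)) : FA × E) := by
        have : op (e * t.1) • (Finsupp.single i (1:A)) = Finsupp.single i (e * t.1 : A) := by
          ext i'
          rw [Finsupp.smul_apply]
          rcases eq_or_ne i i' with rfl | hne
          · rw [Finsupp.single_eq_same, Finsupp.single_eq_same]
            show (1 : A) * (e * t.1) = e * t.1
            rw [one_mul]
          · rw [Finsupp.single_eq_of_ne hne.symm, Finsupp.single_eq_of_ne hne.symm]
            show (0 : A) * (e * t.1) = 0
            rw [zero_mul]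
        rw [Prod.smul_mk, this, smul_zero, Trap.trap_left t.2 he]
      rw [h1, h2, map_smul]
      exact Submodule.subset_span ⟨W.mkQ (Finsupp.single i (1:A), (0:E)), t.1, rfl⟩
  have hES : ∀ q : Q, eps (j q) ∈ S := by
    intro q
    obtain ⟨g, rfl⟩ := N.mkQ_surjective q
    rw [← hTeq]
    exact hTinS g
  -- S is contained in the image of the "e-part" of FA
  set G : Submodule Aᵐᵒᵖ FA :=
    { carrier := {y | ∀ i, e * y i = y i}
      add_mem' := by
        intro a b ha hb i
        rw [Finsupp.add_apply, mul_add, ha i, hb i]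
      zero_mem' := by intro i; rw [Finsupp.zero_apply, mul_zero]
      smul_mem' := by
        intro a y hy i
        rw [Finsupp.smul_apply]
        show e * (y i * unop a) = y i * unop a
        rw [← mul_assoc, hy i] } with hG
  set P' := G.map (W.mkQ.comp (LinearMap.inl Aᵐᵒᵖ FA E)) with hP'
  have hSP : S ≤ P' := by
    rw [hS]
    apply Submodule.span_le.mpr
    rintro x ⟨m, a, rfl⟩
    obtain ⟨z, rfl⟩ := W.mkQ_surjective m
    have hz2 : op (e * a) • z.2 = 0 := by
      rw [smulE, cornerHom_e_mul he htwo, zero_smul]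
    have hz : op (e * a) • z = ((op (e * a) • z.1, (0 : E)) : FA × E) := by
      rw [Prod.smul_def, hz2]
    have hmem : op (e * a) • z.1 ∈ G := by
      intro i
      rw [Finsupp.smul_apply]
      show e * (z.1 i * (unop (op (e * a)))) = z.1 i * (unop (op (e * a)))
      rw [unop_op]
      exact e_mul_stable e (z.1 i) a htwo he
    refine ⟨op (e * a) • z.1, hmem, ?_⟩
    rw [← map_smul, hz]
    rfl
  -- the complement of j(Q) in E
  set KE : Submodule RC E :=
    { carrier := {u | eps u ∈ K}
      add_mem' := by intro a b ha hb; show eps (a + b) ∈ K; rw [map_add]; exact K.add_mem ha hb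
      zero_mem' := by show eps 0 ∈ K; rw [map_zero]; exact K.zero_mem
      smul_mem' := by
        intro c u hu
        show eps (c • u) ∈ K
        have : c • u = op (c.unop.1 : A) • u := by
          rw [smulE, cornerHom_corner he htwo c]
        rw [this, map_smul]
        exact K.smul_mem _ hu } with hKE
  have hdisj : Disjoint (LinearMap.range j) KE := by
    rw [Submodule.disjoint_def]
    rintro u ⟨q, rfl⟩ hKE'
    have h1 : eps (j q) ∈ S ⊓ K := ⟨hES q, hKE'⟩
    rw [hKinf] at h1
    have : eps (j q) = 0 := h1
    exact eps_inj (by rw [this, map_zero])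
  have hcodisj : (LinearMap.range j) ⊔ KE = ⊤ := by
    rw [eq_top_iff]
    intro u _
    have h1 : eps u ∈ S ⊔ K := by rw [hKsup]; trivial
    obtain ⟨s, hs, k, hk, hsk⟩ := Submodule.mem_sup.mp h1
    obtain ⟨y, hyG, hy⟩ := hSP hs
    -- y·(1-e) has components in T
    have hyT : ∀ i, e * ((op (1 - e) • y : FA) i) * (1 - e) = (op (1 - e) • y : FA) i := by
      intro i
      rw [Finsupp.smul_apply]
      show e * (y i * (unop (op (1 - e)))) * (1 - e) = y i * (unop (op (1 - e)))
      rw [unop_op, ← mul_assoc, hyG i, mul_assoc, one_sub_idem he]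
    -- build g : F with chi g = y·(1-e)
    let g : F := ⟨(op (1 - e) • y : FA).support,
      fun i => ⟨(op (1 - e) • y : FA) i, hyT i⟩,
      fun i => by
        rw [Finsupp.mem_support_iff]
        constructor
        · intro h hc
          exact h (congrArg Subtype.val hc)
        · intro h hc
          exact h (Subtype.ext hc)⟩
    have hchig : chi g = op (1 - e) • y := by
      ext i
      rw [chi_apply']
      rfl
    have hu1 : op (1 - e) • u = u := by
      rw [smulE, cornerHom_one_sub, one_smul]
    have heu : eps u = eps (j (N.mkQ g)) + op (1 - e) • k := by
      have h2 : op (1 - e) • eps u = eps u := by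
        rw [← map_smul, hu1]
      rw [← h2, ← hsk, smul_add]
      congr 1
      have h3 : op (1 - e) • s = W.mkQ (chi g, 0) := by
        rw [← hy, hchig]
        rw [show W.mkQ.comp (LinearMap.inl Aᵐᵒᵖ FA E) y = W.mkQ (y, 0) from rfl]
        rw [← map_smul]
        congr 1
        rw [Prod.smul_def, smul_zero]
      rw [h3, hTeq]
    have hk' : u - j (N.mkQ g) ∈ KE := by
      show eps (u - j (N.mkQ g)) ∈ K
      rw [map_sub, heu]
      rw [show eps (j (N.mkQ g)) + op (1 - e) • k - eps (j (N.mkQ g)) = op (1 - e) • k by abel]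
      exact K.smul_mem _ hk
    have : u = j (N.mkQ g) + (u - j (N.mkQ g)) := by abel
    rw [this]
    exact Submodule.add_mem_sup (LinearMap.mem_range_self j _) hk'
  have hcompl : IsCompl (LinearMap.range j) KE := ⟨hdisj, codisjoint_iff.mpr hcodisj⟩
  set pr := Submodule.linearProjOfIsCompl _ _ hcompl with hpr
  set eqJ := LinearEquiv.ofInjective j hj with heqJ
  refine injOfRetract j (eqJ.symm.toLinearMap.comp pr) ?_ hEinj
  intro q
  have h1 : pr (j q) = eqJ q := by
    have : (eqJ q : E) = j q := by rw [heqJ]; rfl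
    rw [← this]
    exact Submodule.linearProjOfIsCompl_apply_left hcompl (eqJ q)
  show eqJ.symm (pr (j q)) = q
  rw [h1, LinearEquiv.symm_apply_apply]

end Dir12

/-- let `e` be an idempotent of `A` such that `eA` is a two-sided ideal
(equivalently `(1-e)Ae = 0`).  Then `M·(eA)` is a direct summand of every right `A`-module
`M` if and only if `eA(1-e)` is hereditary `Σ`-injective as a right module over the corner
ring `(1-e)A(1-e)`, i.e. every quotient of every direct sum of copies of `eA(1-e)` is an
injective `(1-e)A(1-e)`-module. -/
theorem stmt_4 (A : Type) [Ring A] (e : A) (he : e * e = e)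
    (htwo : ∀ a : A, (1 - e) * a * e = 0) :
    (∀ (M : Type) [AddCommGroup M] [Module Aᵐᵒᵖ M],
        IsDirectSummand (Submodule.span Aᵐᵒᵖ {x : M | ∃ (m : M) (a : A), x = op (e * a) • m}))
    ↔
    (∀ (ι : Type) (N : Submodule (CornerRing A (1 - e) (one_sub_idem he))ᵐᵒᵖ
        (ι →₀ Trap A e he)),
      Module.Injective (CornerRing A (1 - e) (one_sub_idem he))ᵐᵒᵖ
        ((ι →₀ Trap A e he) ⧸ N)) := by
  haveI hfe : Fact (e * e = e) := ⟨he⟩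
  haveI hftwo : Fact (∀ a : A, (1 - e) * a * e = 0) := ⟨htwo⟩
  constructor
  · intro h1 ι N
    exact dir12main e ι N h1
  · intro h2 M _ _
    exact dir21main e M h2
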